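/- Under the setup of the paper's Theorem 1: let h be an ℝ^d-valued random vector with mean m = (1-γ)μ_i + γμ_t for class centroids μ_i, μ_t ∈ ℝ^d and γ ∈ [0,1), where h is a uniform average of n independent coordinate-wise-bounded (by S > 0) random vectors with coordinate independence. Suppose the event A of a successful attack implies ‖h - μ_t‖₂ < ε for some 0 < ε. Then P(A) ≤ P(‖h - m‖₂ ≥ (1-γ)‖μ_t - μ_i‖₂ - ε) ≤ 2d·exp(-n·((1-γ)‖μ_t-μ_i‖₂ - ε)² / (2 d S²)), provided (1-γ)‖μ_t - μ_i‖₂ - ε ≥ 0. -/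

import Mathlib

open MeasureTheory ProbabilityTheory Real

lemma aux_quad (p : ℝ) (hp0 : 0 ≤ p) (hp1 : p ≤ 1) (x : ℝ) :
    -(p * x) + Real.log (1 - p + p * Real.exp x) ≤ x ^ 2 / 8 := by
  have hq : ∀ y : ℝ, 0 < 1 - p + p * Real.exp y := by
    intro y
    rcases eq_or_lt_of_le hp0 with h0 | h0
    · simp [← h0]
    · nlinarith [Real.exp_pos y, mul_pos h0 (Real.exp_pos y)]
  set f : ℝ → ℝ := fun y => y ^ 2 / 8 + p * y - Real.log (1 - p + p * Real.exp y) with hf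
  set f' : ℝ → ℝ := fun y => y / 4 + p - p * Real.exp y / (1 - p + p * Real.exp y) with hf'
  have hQ : ∀ y : ℝ, HasDerivAt (fun z => 1 - p + p * Real.exp z) (p * Real.exp y) y := by
    intro y
    exact ((Real.hasDerivAt_exp y).const_mul p).const_add (1 - p)
  have hder : ∀ y, HasDerivAt f (f' y) y := by
    intro y
    have h1 : HasDerivAt (fun z : ℝ => z ^ 2 / 8) (y / 4) y := by
      have := (hasDerivAt_pow 2 y).div_const 8
      exact this.congr_deriv (by ring)
    have h2 : HasDerivAt (fun z : ℝ => p * z) p y := by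
      simpa using (hasDerivAt_id y).const_mul p
    have h4 : HasDerivAt (fun z => Real.log (1 - p + p * Real.exp z))
        (p * Real.exp y / (1 - p + p * Real.exp y)) y := (hQ y).log (hq y).ne'
    exact (h1.add h2).sub h4
  have hder' : ∀ y, HasDerivAt f'
      (1 / 4 - (1 - p) * (p * Real.exp y) / (1 - p + p * Real.exp y) ^ 2) y := by
    intro y
    have h5 : HasDerivAt (fun z : ℝ => z / 4 + p) (1 / 4) y := by
      simpa using ((hasDerivAt_id y).div_const 4).add_const p
    have h6 : HasDerivAt (fun z => p * Real.exp z / (1 - p + p * Real.exp z))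
        ((p * Real.exp y * (1 - p + p * Real.exp y) - p * Real.exp y * (p * Real.exp y)) /
          (1 - p + p * Real.exp y) ^ 2) y :=
      ((Real.hasDerivAt_exp y).const_mul p).div (hQ y) (hq y).ne'
    have := h5.sub h6
    exact this.congr_deriv (by ring)
  have hf''_nonneg : ∀ y, 0 ≤ 1 / 4 - (1 - p) * (p * Real.exp y) / (1 - p + p * Real.exp y) ^ 2 := by
    intro y
    rw [sub_nonneg, div_le_iff₀ (pow_pos (hq y) 2)]
    nlinarith [sq_nonneg ((1 - p) - p * Real.exp y)]
  have hmono' : Monotone f' := by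
    refine monotone_of_deriv_nonneg (fun y => (hder' y).differentiableAt) ?_
    intro y
    rw [(hder' y).deriv]
    exact hf''_nonneg y
  have hf'0 : f' 0 = 0 := by simp [hf']
  have hf0 : f 0 = 0 := by simp [hf]
  have key : 0 ≤ f x := by
    rcases le_or_gt 0 x with hx | hx
    · have hmonoF : MonotoneOn f (Set.Ici (0 : ℝ)) := by
        refine monotoneOn_of_deriv_nonneg (convex_Ici 0)
          (fun y _ => ((hder y).differentiableAt.continuousAt.continuousWithinAt)) ?_ ?_
        · intro y hy
          exact (hder y).differentiableAt.differentiableWithinAt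
        · intro y hy
          rw [(hder y).deriv]
          rw [interior_Ici] at hy
          have := hmono' (le_of_lt hy)
          rw [hf'0] at this
          exact this
      have := hmonoF (Set.self_mem_Ici) (Set.mem_Ici.2 hx) hx
      rwa [hf0] at this
    · have hantiF : AntitoneOn f (Set.Iic (0 : ℝ)) := by
        refine antitoneOn_of_deriv_nonpos (convex_Iic 0)
          (fun y _ => ((hder y).differentiableAt.continuousAt.continuousWithinAt)) ?_ ?_
        · intro y hy
          exact (hder y).differentiableAt.differentiableWithinAt
        · intro y hy
          rw [(hder y).deriv]
          rw [interior_Iic] at hy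
          have := hmono' (le_of_lt hy)
          rw [hf'0] at this
          exact this
      have := hantiF (Set.mem_Iic.2 hx.le) (Set.self_mem_Iic) hx.le
      rwa [hf0] at this
  have : Real.log (1 - p + p * Real.exp x) - p * x ≤ x ^ 2 / 8 := by
    have := key
    simp only [hf] at this
    linarith
  linarith

lemma integrable_of_abs_le{Ω : Type*} [MeasurableSpace Ω] {μ : Measure Ω} [IsFiniteMeasure μ]
    {f : Ω → ℝ} (hf : AEStronglyMeasurable f μ) {C : ℝ} (h : ∀ᵐ ω ∂μ, |f ω| ≤ C) :
    Integrable f μ :=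
  (integrable_const C).mono' hf (by simpa [Real.norm_eq_abs] using h)

lemma hoeffding_mgf {Ω : Type*} [MeasurableSpace Ω] {μ : Measure Ω} [IsProbabilityMeasure μ]
    {X : Ω → ℝ} (hX : Measurable X) {a b : ℝ} (hab : a < b)
    (hXab : ∀ᵐ ω ∂μ, X ω ∈ Set.Icc a b) (hmean : ∫ ω, X ω ∂μ = 0) (t : ℝ) :
    mgf X μ t ≤ Real.exp (t ^ 2 * (b - a) ^ 2 / 8) := by
  have hba : (0:ℝ) < b - a := sub_pos.2 hab
  have habs : ∀ᵐ ω ∂μ, |X ω| ≤ max |a| |b| := by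
    filter_upwards [hXab] with ω hω
    exact abs_le_max_abs_abs hω.1 hω.2
  have hXint : Integrable X μ := integrable_of_abs_le hX.aestronglyMeasurable habs
  have ha : a ≤ 0 := by
    have h1 : ∫ _ω, a ∂μ ≤ ∫ ω, X ω ∂μ :=
      integral_mono_ae (integrable_const a) hXint
        (by filter_upwards [hXab] with ω hω using hω.1)
    simpa [hmean] using h1
  have hb : 0 ≤ b := by
    have h1 : ∫ ω, X ω ∂μ ≤ ∫ _ω, b ∂μ :=
      integral_mono_ae hXint (integrable_const b)
        (by filter_upwards [hXab] with ω hω using hω.2)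
    simpa [hmean] using h1
  set p : ℝ := -a / (b - a) with hp
  have hp0 : 0 ≤ p := div_nonneg (by linarith) hba.le
  have hp1 : p ≤ 1 := by
    rw [hp, div_le_one hba]; linarith
  set c1 : ℝ := (b * Real.exp (t * a) - a * Real.exp (t * b)) / (b - a) with hc1def
  set c2 : ℝ := (Real.exp (t * b) - Real.exp (t * a)) / (b - a) with hc2def
  -- pointwise convexity bound
  have hpt : ∀ᵐ ω ∂μ, Real.exp (t * X ω) ≤ c1 + c2 * X ω := by
    filter_upwards [hXab] with ω hω
    set x := X ω
    have hu : 0 ≤ (b - x) / (b - a) := div_nonneg (by linarith [hω.2]) hba.le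
    have hv : 0 ≤ (x - a) / (b - a) := div_nonneg (by linarith [hω.1]) hba.le
    have huv : (b - x) / (b - a) + (x - a) / (b - a) = 1 := by
      field_simp
      ring
    have hconv := convexOn_exp.2 (Set.mem_univ (t * a)) (Set.mem_univ (t * b)) hu hv huv
    have hxy : ((b - x) / (b - a)) • (t * a) + ((x - a) / (b - a)) • (t * b) = t * x := by
      simp only [smul_eq_mul]
      field_simp
      ring
    rw [hxy] at hconv
    calc Real.exp (t * x) ≤ (b - x) / (b - a) * Real.exp (t * a)
          + (x - a) / (b - a) * Real.exp (t * b) := by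
          simpa [smul_eq_mul] using hconv
      _ = c1 + c2 * x := by rw [hc1def, hc2def]; field_simp; ring
  -- integrate
  have hExpInt : Integrable (fun ω => Real.exp (t * X ω)) μ := by
    refine integrable_of_abs_le ((hX.const_mul t).exp).aestronglyMeasurable
      (C := Real.exp (|t| * max |a| |b|)) ?_
    filter_upwards [habs] with ω hω
    rw [abs_of_pos (Real.exp_pos _), Real.exp_le_exp]
    calc t * X ω ≤ |t * X ω| := le_abs_self _
      _ = |t| * |X ω| := abs_mul _ _
      _ ≤ |t| * max |a| |b| := by
          exact mul_le_mul_of_nonneg_left hω (abs_nonneg t)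
  have hRHSint : Integrable (fun ω => c1 + c2 * X ω) μ := (integrable_const c1).add (hXint.const_mul c2)
  have hint : mgf X μ t ≤ c1 := by
    have h1 : mgf X μ t ≤ ∫ ω, (c1 + c2 * X ω) ∂μ :=
      integral_mono_ae hExpInt hRHSint hpt
    have h2 : ∫ ω, (c1 + c2 * X ω) ∂μ = c1 := by
      rw [integral_add (integrable_const c1) (hXint.const_mul c2),
        integral_const_mul, hmean]
      simp
    rw [h2] at h1
    exact h1
  -- bound c1
  set h0 : ℝ := t * (b - a) with hh0
  have hq : 0 < 1 - p + p * Real.exp h0 := by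
    rcases eq_or_lt_of_le hp0 with h0' | h0'
    · simp [← h0']
    · nlinarith [Real.exp_pos h0, mul_pos h0' (Real.exp_pos h0)]
  have hexpsub : Real.exp h0 = Real.exp (t * b) / Real.exp (t * a) := by
    rw [← Real.exp_sub, hh0]; ring_nf
  have hc1eq : c1 = Real.exp (-(p * h0)) * (1 - p + p * Real.exp h0) := by
    have hpe : -(p * h0) = t * a := by
      rw [hp, hh0]; field_simp
    rw [hpe, hexpsub, hc1def, hp]
    field_simp
    ring
  have hfin : c1 ≤ Real.exp (t ^ 2 * (b - a) ^ 2 / 8) := by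
    rw [hc1eq]
    have : Real.exp (-(p * h0)) * (1 - p + p * Real.exp h0)
        = Real.exp (-(p * h0) + Real.log (1 - p + p * Real.exp h0)) := by
      rw [Real.exp_add, Real.exp_log hq]
    rw [this]
    rw [Real.exp_le_exp]
    have := aux_quad p hp0 hp1 h0
    calc -(p * h0) + Real.log (1 - p + p * Real.exp h0) ≤ h0 ^ 2 / 8 := this
      _ = t ^ 2 * (b - a) ^ 2 / 8 := by rw [hh0]; ring
  exact hint.trans hfin

lemma hoeffding_mgf_centered{Ω : Type*} [MeasurableSpace Ω] {μ : Measure Ω}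
    [IsProbabilityMeasure μ] {X : Ω → ℝ} (hX : Measurable X) {S : ℝ} (hS : 0 < S)
    (hb : ∀ᵐ ω ∂μ, |X ω| ≤ S) (t : ℝ) :
    mgf (fun ω => X ω - ∫ x, X x ∂μ) μ t ≤ Real.exp (t ^ 2 * S ^ 2 / 2) := by
  set c : ℝ := ∫ x, X x ∂μ with hc
  have hXint : Integrable X μ := integrable_of_abs_le hX.aestronglyMeasurable hb
  have hcS : |c| ≤ S := by
    have h1 : ‖∫ x, X x ∂μ‖ ≤ ∫ x, ‖X x‖ ∂μ := norm_integral_le_integral_norm _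
    simp only [Real.norm_eq_abs] at h1
    refine h1.trans ?_
    calc ∫ x, |X x| ∂μ ≤ ∫ _x, S ∂μ := integral_mono_ae hXint.abs (integrable_const S) hb
      _ = S := by simp
  have hmean0 : ∫ ω, (X ω - c) ∂μ = 0 := by
    rw [integral_sub hXint (integrable_const c)]
    simp [hc]
  have hab : -S - c < S - c := by linarith
  have h1 : mgf (fun ω => X ω - c) μ t ≤ Real.exp (t ^ 2 * ((S - c) - (-S - c)) ^ 2 / 8) := by
    refine hoeffding_mgf (hX.sub_const c) hab ?_ hmean0 t
    filter_upwards [hb] with ω hω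
    have := abs_le.1 hω
    constructor <;> [linarith [this.1]; linarith [this.2]]
  calc mgf (fun ω => X ω - c) μ t ≤ Real.exp (t ^ 2 * ((S - c) - (-S - c)) ^ 2 / 8) := h1
    _ = Real.exp (t ^ 2 * S ^ 2 / 2) := by congr 1; ring

lemma iIndepFun_fix_snd {Ω : Type*} [MeasurableSpace Ω] {μ : Measure Ω} {n d : ℕ}
    (ξ : Fin n × Fin d → Ω → ℝ)
    (h : iIndepFun ξ μ) (j : Fin d) :
    iIndepFun (fun k : Fin n => ξ (k, j)) μ := by
  rw [iIndepFun_iff_measure_inter_preimage_eq_mul] at h ⊢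
  intro S sets hsets
  classical
  let e : Fin n ↪ Fin n × Fin d :=
    ⟨fun k => (k, j), fun a b hab => by simpa using congrArg Prod.fst hab⟩
  have key := h (S.map e) (sets := fun p => sets p.1) (by
    intro p hp
    rw [Finset.mem_map] at hp
    obtain ⟨k, hk, rfl⟩ := hp
    exact hsets k hk)
  have hL : (⋂ p ∈ Finset.map e S, ξ p ⁻¹' sets p.1) = ⋂ k ∈ S, ξ (k, j) ⁻¹' sets k := by
    ext ω
    simp [e]
    exact Iff.rfl
  have hR : (∏ p ∈ Finset.map e S, μ (ξ p ⁻¹' sets p.1)) = ∏ k ∈ S, μ (ξ (k, j) ⁻¹' sets k) :=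
    Finset.prod_map S e fun p => μ (ξ p ⁻¹' sets p.1)
  rw [hL, hR] at key
  exact key

lemma coord_tail{Ω : Type*} [MeasureSpace Ω] [IsProbabilityMeasure (ℙ : Measure Ω)] {n : ℕ}
    (hn : 0 < n) (X : Fin n → Ω → ℝ) (hXmeas : ∀ k, Measurable (X k))
    (hXindep : iIndepFun X ℙ)
    {S : ℝ} (hS : 0 < S) (hb : ∀ k, ∀ᵐ ω ∂ℙ, |X k ω| ≤ S) {s : ℝ} (hs : 0 ≤ s) :
    ℙ {ω | s ≤ |(1 / n : ℝ) * ∑ k, X k ω - (1 / n : ℝ) * ∑ k, ∫ ω', X k ω' ∂ℙ|} ≤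
      ENNReal.ofReal (2 * Real.exp (-(n * s ^ 2) / (2 * S ^ 2))) := by
  set c : Fin n → ℝ := fun k => ∫ ω', X k ω' ∂ℙ with hc
  set Y : Fin n → Ω → ℝ := fun k ω => X k ω - c k with hY
  have hYmeas : ∀ k, Measurable (Y k) := fun k => (hXmeas k).sub_const (c k)
  have hYindep : iIndepFun Y ℙ :=
    hXindep.comp (fun k (x : ℝ) => x - c k) (fun k => measurable_id.sub_const (c k))
  have hcS : ∀ k, |c k| ≤ S := by
    intro k
    have h1 : ‖∫ ω', X k ω' ∂ℙ‖ ≤ ∫ ω', ‖X k ω'‖ ∂ℙ := norm_integral_le_integral_norm _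
    simp only [Real.norm_eq_abs] at h1
    refine h1.trans ?_
    calc ∫ ω', |X k ω'| ∂ℙ ≤ ∫ _ω', S ∂ℙ := integral_mono_ae
          (integrable_of_abs_le (hXmeas k).aestronglyMeasurable (hb k)).abs
          (integrable_const S) (hb k)
      _ = S := by simp
  have hYb : ∀ k, ∀ᵐ ω ∂ℙ, |Y k ω| ≤ 2 * S := by
    intro k
    filter_upwards [hb k] with ω hω
    calc |Y k ω| ≤ |X k ω| + |c k| := abs_sub _ _
      _ ≤ 2 * S := by linarith [hcS k]
  have hsummeas : Measurable (∑ k, Y k) := by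
    have : (∑ k, Y k) = fun ω => ∑ k, Y k ω := by funext ω; simp
    rw [this]
    exact Finset.measurable_sum _ (fun k _ => hYmeas k)
  have hsumb : ∀ᵐ ω ∂ℙ, |(∑ k, Y k) ω| ≤ n * (2 * S) := by
    filter_upwards [MeasureTheory.ae_all_iff.2 hYb] with ω hω
    calc |(∑ k, Y k) ω| = |∑ k, Y k ω| := by simp
      _ ≤ ∑ k, |Y k ω| := Finset.abs_sum_le_sum_abs _ _
      _ ≤ ∑ _k : Fin n, (2 * S) := Finset.sum_le_sum (fun k _ => hω k)
      _ = n * (2 * S) := by simp [Finset.sum_const, Finset.card_univ]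
  have hmgfsum : ∀ t : ℝ, mgf (∑ k, Y k) ℙ t ≤ Real.exp (n * (t ^ 2 * S ^ 2 / 2)) := by
    intro t
    rw [iIndepFun.mgf_sum hYindep hYmeas Finset.univ]
    calc (∏ k, mgf (Y k) ℙ t) ≤ ∏ _k : Fin n, Real.exp (t ^ 2 * S ^ 2 / 2) :=
        Finset.prod_le_prod (fun k _ => mgf_nonneg)
          (fun k _ => hoeffding_mgf_centered (hXmeas k) hS (hb k) t)
      _ = Real.exp (n * (t ^ 2 * S ^ 2 / 2)) := by
          rw [Finset.prod_const, ← Real.exp_nat_mul, Finset.card_univ, Fintype.card_fin]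
  have hint : ∀ t : ℝ, Integrable (fun ω => Real.exp (t * (∑ k, Y k) ω)) ℙ := by
    intro t
    refine integrable_of_abs_le ((hsummeas.const_mul t).exp).aestronglyMeasurable
      (C := Real.exp (|t| * (n * (2 * S)))) ?_
    filter_upwards [hsumb] with ω hω
    rw [abs_of_pos (Real.exp_pos _), Real.exp_le_exp]
    calc t * (∑ k, Y k) ω ≤ |t * (∑ k, Y k) ω| := le_abs_self _
      _ = |t| * |(∑ k, Y k) ω| := abs_mul _ _
      _ ≤ |t| * (n * (2 * S)) := mul_le_mul_of_nonneg_left hω (abs_nonneg t)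
  set t0 : ℝ := s / S ^ 2 with ht0def
  have ht0 : 0 ≤ t0 := div_nonneg hs (by positivity)
  have hexpeq : -t0 * ((n : ℝ) * s) + n * (t0 ^ 2 * S ^ 2 / 2) = -(n * s ^ 2) / (2 * S ^ 2) := by
    rw [ht0def]; field_simp; ring
  have hup : (ℙ {ω | (n : ℝ) * s ≤ (∑ k, Y k) ω}).toReal ≤
      Real.exp (-(n * s ^ 2) / (2 * S ^ 2)) := by
    refine (measure_ge_le_exp_mul_mgf ((n : ℝ) * s) ht0 (hint t0)).trans ?_
    calc Real.exp (-t0 * ((n : ℝ) * s)) * mgf (∑ k, Y k) ℙ t0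
        ≤ Real.exp (-t0 * ((n : ℝ) * s)) * Real.exp (n * (t0 ^ 2 * S ^ 2 / 2)) :=
          mul_le_mul_of_nonneg_left (hmgfsum t0) (Real.exp_pos _).le
      _ = Real.exp (-(n * s ^ 2) / (2 * S ^ 2)) := by rw [← Real.exp_add, hexpeq]
  have hlow : (ℙ {ω | (∑ k, Y k) ω ≤ -((n : ℝ) * s)}).toReal ≤
      Real.exp (-(n * s ^ 2) / (2 * S ^ 2)) := by
    refine (measure_le_le_exp_mul_mgf (-((n : ℝ) * s)) (neg_nonpos.2 ht0) (hint (-t0))).trans ?_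
    calc Real.exp (-(-t0) * (-((n : ℝ) * s))) * mgf (∑ k, Y k) ℙ (-t0)
        ≤ Real.exp (-(-t0) * (-((n : ℝ) * s))) * Real.exp (n * ((-t0) ^ 2 * S ^ 2 / 2)) :=
          mul_le_mul_of_nonneg_left (hmgfsum (-t0)) (Real.exp_pos _).le
      _ = Real.exp (-(n * s ^ 2) / (2 * S ^ 2)) := by
          rw [← Real.exp_add, ← hexpeq]; congr 1; ring
  have hsub : {ω | s ≤ |(1 / n : ℝ) * ∑ k, X k ω - (1 / n : ℝ) * ∑ k, c k|} ⊆
      {ω | (n : ℝ) * s ≤ (∑ k, Y k) ω} ∪ {ω | (∑ k, Y k) ω ≤ -((n : ℝ) * s)} := by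
    intro ω hω
    simp only [Set.mem_setOf_eq] at hω
    have hn' : (0 : ℝ) < n := by exact_mod_cast hn
    have hid : (∑ k, Y k) ω = ∑ k, X k ω - ∑ k, c k := by
      simp [hY, Finset.sum_sub_distrib]
    have h2 : (1 / n : ℝ) * ∑ k, X k ω - (1 / n : ℝ) * ∑ k, c k
        = (1 / n : ℝ) * (∑ k, Y k) ω := by rw [hid]; ring
    rw [h2, abs_mul, abs_of_pos (by positivity : (0 : ℝ) < 1 / (n : ℝ))] at hω
    have h3 : (n : ℝ) * s ≤ |(∑ k, Y k) ω| := by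
      have := mul_le_mul_of_nonneg_left hω hn'.le
      rw [mul_comm (n:ℝ) (1 / (n:ℝ) * _)] at this
      calc (n : ℝ) * s ≤ 1 / (n:ℝ) * |(∑ k, Y k) ω| * (n:ℝ) := this
        _ = |(∑ k, Y k) ω| := by field_simp
    rcases le_abs.1 h3 with h4 | h4
    · exact Or.inl h4
    · exact Or.inr (by simpa only [Set.mem_setOf_eq] using by linarith)
  calc ℙ {ω | s ≤ |(1 / n : ℝ) * ∑ k, X k ω - (1 / n : ℝ) * ∑ k, c k|}
      ≤ ℙ ({ω | (n : ℝ) * s ≤ (∑ k, Y k) ω} ∪ {ω | (∑ k, Y k) ω ≤ -((n : ℝ) * s)}) :=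
        measure_mono hsub
    _ ≤ ℙ {ω | (n : ℝ) * s ≤ (∑ k, Y k) ω} + ℙ {ω | (∑ k, Y k) ω ≤ -((n : ℝ) * s)} :=
        measure_union_le _ _
    _ ≤ ENNReal.ofReal (Real.exp (-(n * s ^ 2) / (2 * S ^ 2))) +
        ENNReal.ofReal (Real.exp (-(n * s ^ 2) / (2 * S ^ 2))) := by
        gcongr
        · exact (ENNReal.le_ofReal_iff_toReal_le (measure_ne_top _ _) (Real.exp_pos _).le).2 hup
        · exact (ENNReal.le_ofReal_iff_toReal_le (measure_ne_top _ _) (Real.exp_pos _).le).2 hlow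
    _ = ENNReal.ofReal (2 * Real.exp (-(n * s ^ 2) / (2 * S ^ 2))) := by
        rw [← ENNReal.ofReal_add (Real.exp_pos _).le (Real.exp_pos _).le]
        congr 1; ring

theorem stmt_11 {Ω : Type*} [MeasureSpace Ω] [IsProbabilityMeasure (ℙ : Measure Ω)]
    (d n : ℕ) (hn : 0 < n) (hd : 0 < d)
    (ξ : Fin n × Fin d → Ω → ℝ)
    (hmeas : ∀ p, Measurable (ξ p))
    (hindep : iIndepFun ξ ℙ)
    (S : ℝ) (hS : 0 < S)
    (hbound : ∀ p, ∀ᵐ ω ∂ℙ, |ξ p ω| ≤ S)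
    (h : Ω → EuclideanSpace ℝ (Fin d))
    (hdef : ∀ ω, ∀ j : Fin d, h ω j = (1 / n : ℝ) * ∑ k : Fin n, ξ (k, j) ω)
    (μi μt m : EuclideanSpace ℝ (Fin d)) (γ : ℝ) (hγ0 : 0 ≤ γ) (hγ1 : γ < 1)
    (hm : m = (1 - γ) • μi + γ • μt)
    (hmean : ∀ j : Fin d, m j = ∫ ω, h ω j ∂ℙ)
    (ε : ℝ) (hε : 0 < ε)
    (A : Set Ω) (hA : ∀ ω ∈ A, ‖h ω - μt‖ < ε)
    (hεsmall : 0 ≤ (1 - γ) * ‖μt - μi‖ - ε) :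
    ℙ A ≤ ℙ {ω | (1 - γ) * ‖μt - μi‖ - ε ≤ ‖h ω - m‖} ∧
    ℙ {ω | (1 - γ) * ‖μt - μi‖ - ε ≤ ‖h ω - m‖} ≤
      ENNReal.ofReal (2 * d *
        Real.exp (-(n * ((1 - γ) * ‖μt - μi‖ - ε) ^ 2) / (2 * d * S ^ 2))) := by
  set tt : ℝ := (1 - γ) * ‖μt - μi‖ - ε with htt
  -- Part 1
  have hmμt : ‖m - μt‖ = (1 - γ) * ‖μt - μi‖ := by
    have h1 : m - μt = (1 - γ) • (μi - μt) := by rw [hm]; module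
    rw [h1, norm_smul, Real.norm_eq_abs, abs_of_pos (by linarith : (0:ℝ) < 1 - γ),
      norm_sub_rev]
  have part1 : ℙ A ≤ ℙ {ω | tt ≤ ‖h ω - m‖} := by
    refine measure_mono ?_
    intro ω hω
    have h1 : ‖m - μt‖ ≤ ‖h ω - m‖ + ‖h ω - μt‖ := by
      calc ‖m - μt‖ = ‖(m - h ω) + (h ω - μt)‖ := by congr 1; abel
        _ ≤ ‖m - h ω‖ + ‖h ω - μt‖ := norm_add_le _ _
        _ = ‖h ω - m‖ + ‖h ω - μt‖ := by rw [norm_sub_rev]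
    have h2 := hA ω hω
    simp only [Set.mem_setOf_eq, htt]
    rw [← hmμt]
    linarith
  refine ⟨part1, ?_⟩
  -- Part 2
  have hd' : (0:ℝ) < d := by exact_mod_cast hd
  have hsd : (0:ℝ) < Real.sqrt d := Real.sqrt_pos.2 hd'
  set s : ℝ := tt / Real.sqrt d with hsdef
  have hs : 0 ≤ s := div_nonneg hεsmall hsd.le
  have hs2 : s ^ 2 = tt ^ 2 / d := by
    rw [hsdef, div_pow, Real.sq_sqrt hd'.le]
  -- coordinate decomposition
  have hsubset : {ω | tt ≤ ‖h ω - m‖} ⊆ ⋃ j : Fin d, {ω | s ≤ |h ω j - m j|} := by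
    intro ω hω
    simp only [Set.mem_setOf_eq] at hω
    by_contra hc
    simp only [Set.mem_iUnion, Set.mem_setOf_eq, not_exists, not_le] at hc
    have hlt : ‖h ω - m‖ < tt := by
      have hnorm : ‖h ω - m‖ = Real.sqrt (∑ j : Fin d, (h ω j - m j) ^ 2) := by
        rw [EuclideanSpace.norm_eq]
        congr 1
        refine Finset.sum_congr rfl fun j _ => ?_
        simp [PiLp.sub_apply, Real.norm_eq_abs, sq_abs]
      have hsumlt : (∑ j : Fin d, (h ω j - m j) ^ 2) < ∑ _j : Fin d, s ^ 2 := by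
        refine Finset.sum_lt_sum_of_nonempty ?_ ?_
        · exact Finset.univ_nonempty_iff.2 (Fin.pos_iff_nonempty.mp hd)
        · intro j _
          calc (h ω j - m j) ^ 2 = |h ω j - m j| ^ 2 := (sq_abs _).symm
            _ < s ^ 2 := by
              refine pow_lt_pow_left₀ (hc j) (abs_nonneg _) (by norm_num)
      have : (∑ _j : Fin d, s ^ 2 : ℝ) = tt ^ 2 := by
        rw [Finset.sum_const, Finset.card_univ, Fintype.card_fin, nsmul_eq_mul, hs2]
        field_simp
      rw [hnorm]
      calc Real.sqrt (∑ j : Fin d, (h ω j - m j) ^ 2) < Real.sqrt (tt ^ 2) := by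
            refine Real.sqrt_lt_sqrt (Finset.sum_nonneg fun j _ => sq_nonneg _) ?_
            rw [← this]; exact hsumlt
        _ = tt := Real.sqrt_sq hεsmall
    linarith
  -- mean identity per coordinate
  have hmj : ∀ j : Fin d, m j = (1 / n : ℝ) * ∑ k : Fin n, ∫ ω, ξ (k, j) ω ∂ℙ := by
    intro j
    rw [hmean j]
    calc ∫ ω, h ω j ∂ℙ = ∫ ω, (1 / n : ℝ) * ∑ k : Fin n, ξ (k, j) ω ∂ℙ := by
          refine integral_congr_ae (Filter.Eventually.of_forall fun ω => ?_)
          exact hdef ω j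
      _ = (1 / n : ℝ) * ∫ ω, ∑ k : Fin n, ξ (k, j) ω ∂ℙ := integral_const_mul _ _
      _ = (1 / n : ℝ) * ∑ k : Fin n, ∫ ω, ξ (k, j) ω ∂ℙ := by
          rw [integral_finset_sum]
          intro k _
          exact integrable_of_abs_le (hmeas (k, j)).aestronglyMeasurable (hbound (k, j))
  have hcoord : ∀ j : Fin d, ℙ {ω | s ≤ |h ω j - m j|} ≤
      ENNReal.ofReal (2 * Real.exp (-(n * s ^ 2) / (2 * S ^ 2))) := by
    intro j
    have heq : {ω | s ≤ |h ω j - m j|} =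
        {ω | s ≤ |(1 / n : ℝ) * ∑ k : Fin n, ξ (k, j) ω -
          (1 / n : ℝ) * ∑ k : Fin n, ∫ ω', ξ (k, j) ω' ∂ℙ|} := by
      ext ω
      simp only [Set.mem_setOf_eq, hdef ω j, hmj j]
    rw [heq]
    exact coord_tail hn (fun k => ξ (k, j)) (fun k => hmeas (k, j))
      (iIndepFun_fix_snd ξ hindep j) hS (fun k => hbound (k, j)) hs
  have hexpeq : -(n * s ^ 2) / (2 * S ^ 2) = -((n : ℝ) * tt ^ 2) / (2 * d * S ^ 2) := by
    have h1 : -((n:ℝ) * (tt ^ 2 / d)) = -((n:ℝ) * tt ^ 2) / d := by ring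
    rw [hs2, h1, div_div]
    congr 1
    ring
  calc ℙ {ω | tt ≤ ‖h ω - m‖} ≤ ℙ (⋃ j : Fin d, {ω | s ≤ |h ω j - m j|}) :=
        measure_mono hsubset
    _ ≤ ∑ j : Fin d, ℙ {ω | s ≤ |h ω j - m j|} := by
        exact measure_iUnion_fintype_le _ _
    _ ≤ (∑ _j : Fin d, ENNReal.ofReal (2 * Real.exp (-(n * s ^ 2) / (2 * S ^ 2)))) :=
        Finset.sum_le_sum fun j _ => hcoord j
    _ = (d : ENNReal) * ENNReal.ofReal (2 * Real.exp (-(n * s ^ 2) / (2 * S ^ 2))) := by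
        rw [Finset.sum_const, Finset.card_univ, Fintype.card_fin, nsmul_eq_mul]
    _ = ENNReal.ofReal (2 * d * Real.exp (-((n:ℝ) * tt ^ 2) / (2 * d * S ^ 2))) := by
        rw [← ENNReal.ofReal_natCast d, ← ENNReal.ofReal_mul (by positivity), hexpeq]
        congr 1
        ring
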